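/- (Proposition 5.3.) Let n ≥ 1, let 1 ≤ i < j ≤ n, let A be the n×n permutation matrix of the transposition exchanging coordinates i and j, and let g₀ = [[A, 0], [0, 1]] ∈ GL(n+1, ℝ). For b, c ∈ ℝⁿ let g_{b,c} = [[Iₙ + bcᵀ, b], [cᵀ, 1]] (which is invertible). Let D(m) = diag(m₁, …, mₙ) and E(m) = mmᵀ. Then for every m ∈ ℝⁿ with cᵀAm + 1 > 0: T_{g₀}(T_{g_{b,c}}(D))(m) = T_{g_{Ab,Ac}}(D)(m) and T_{g₀}(T_{g_{b,c}}(E))(m) = T_{g_{Ab,Ac}}(E)(m). -/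

import Mathlib

open Matrix

/-- The homography `h_g(x) = (Ax + b)/(cᵀx + d)` associated to the block matrix
`g = [[A, b], [cᵀ, d]]`. -/
noncomputable def homog {n : ℕ} (A : Matrix (Fin n) (Fin n) ℝ) (b c : Fin n → ℝ) (d : ℝ)
    (x : Fin n → ℝ) : Fin n → ℝ :=
  (c ⬝ᵥ x + d)⁻¹ • (A.mulVec x + b)

/-- The Jacobian matrix `h'_g(x) = (cᵀx + d)⁻² ((cᵀx + d)A − (Ax + b)cᵀ)`. -/
noncomputable def homogJac {n : ℕ} (A : Matrix (Fin n) (Fin n) ℝ) (b c : Fin n → ℝ) (d : ℝ)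
    (x : Fin n → ℝ) : Matrix (Fin n) (Fin n) ℝ :=
  ((c ⬝ᵥ x + d) ^ 2)⁻¹ • ((c ⬝ᵥ x + d) • A - vecMulVec (A.mulVec x + b) c)

/-- The transformation `T_g(V)(m) = (cᵀm + d)⁻¹ (h'_g(m))⁻¹ V(h_g(m)) ((h'_g(m))ᵀ)⁻¹`. -/
noncomputable def Tg {n : ℕ} (A : Matrix (Fin n) (Fin n) ℝ) (b c : Fin n → ℝ) (d : ℝ)
    (V : (Fin n → ℝ) → Matrix (Fin n) (Fin n) ℝ) (m : Fin n → ℝ) :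
    Matrix (Fin n) (Fin n) ℝ :=
  (c ⬝ᵥ m + d)⁻¹ •
    ((homogJac A b c d m)⁻¹ * V (homog A b c d m) * ((homogJac A b c d m)ᵀ)⁻¹)

variable {n : ℕ}

lemma perm_mulVec (σ : Equiv.Perm (Fin n)) (v : Fin n → ℝ) :
    (σ.permMatrix ℝ).mulVec v = fun a => v (σ a) := by
  ext a
  simp [mulVec, dotProduct, PEquiv.toMatrix_toPEquiv_eq, one_apply, Equiv.toPEquiv_apply]

lemma perm_mul_perm (σ : Equiv.Perm (Fin n)) (hσ : ∀ a, σ (σ a) = a) :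
    (σ.permMatrix ℝ) * (σ.permMatrix ℝ) = 1 := by
  rw [PEquiv.toMatrix_toPEquiv_mul]
  ext a b
  simp [submatrix_apply, PEquiv.toMatrix_toPEquiv_eq, one_apply, Equiv.toPEquiv_apply, hσ]

lemma perm_transpose (σ : Equiv.Perm (Fin n)) (hσ : ∀ a, σ (σ a) = a) :
    (σ.permMatrix ℝ)ᵀ = σ.permMatrix ℝ := by
  ext a b
  simp only [transpose_apply, PEquiv.toMatrix_toPEquiv_eq, one_apply, Equiv.toPEquiv_apply]
  by_cases h : σ a = b
  · simp [← h, hσ, one_apply]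
  · have h2 : σ b ≠ a := fun h3 => h (by rw [← h3, hσ])
    simp [h, h2]

lemma mul_vecMulVec' (P : Matrix (Fin n) (Fin n) ℝ) (u v : Fin n → ℝ) :
    P * vecMulVec u v = vecMulVec (P.mulVec u) v := by
  ext a b
  simp [mul_apply, vecMulVec_apply, mulVec, dotProduct, Finset.sum_mul, mul_assoc]

lemma vecMulVec_mul' (P : Matrix (Fin n) (Fin n) ℝ) (u v : Fin n → ℝ) :
    vecMulVec u v * P = vecMulVec u (Pᵀ.mulVec v) := by
  ext a b
  simp [mul_apply, vecMulVec_apply, mulVec, dotProduct, Finset.mul_sum, mul_comm, mul_assoc,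
    mul_left_comm]

lemma vecMulVec_mulVec' (u v x : Fin n → ℝ) :
    (vecMulVec u v).mulVec x = (v ⬝ᵥ x) • u := by
  ext a
  simp [mulVec, vecMulVec_apply, dotProduct, Finset.mul_sum, mul_comm, mul_left_comm, mul_assoc]

lemma perm_diag (σ : Equiv.Perm (Fin n)) (hσ : ∀ a, σ (σ a) = a) (w : Fin n → ℝ) :
    (σ.permMatrix ℝ) * diagonal w * (σ.permMatrix ℝ)
      = diagonal ((σ.permMatrix ℝ).mulVec w) := by
  rw [PEquiv.toMatrix_toPEquiv_mul, PEquiv.mul_toMatrix_toPEquiv, perm_mulVec]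
  ext a b
  have hsymm : σ.symm b = σ b := by
    apply σ.injective; simp [hσ]
  simp only [submatrix_apply, hsymm, diagonal_apply]
  by_cases h : a = b
  · simp [h]
  · simp [h, σ.injective.ne h]

lemma key (σ : Equiv.Perm (Fin n)) (hσ : ∀ a, σ (σ a) = a)
    (b c m : Fin n → ℝ) (hs : c ⬝ᵥ (σ.permMatrix ℝ).mulVec m + 1 ≠ 0)
    (V V' : (Fin n → ℝ) → Matrix (Fin n) (Fin n) ℝ)
    (hV : ∀ y, (σ.permMatrix ℝ) * V ((σ.permMatrix ℝ).mulVec y) * (σ.permMatrix ℝ) = V' y) :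
    Tg (σ.permMatrix ℝ) 0 0 1 (fun x => Tg (1 + vecMulVec b c) b c 1 V x) m
      = Tg (1 + vecMulVec ((σ.permMatrix ℝ).mulVec b) ((σ.permMatrix ℝ).mulVec c))
          ((σ.permMatrix ℝ).mulVec b) ((σ.permMatrix ℝ).mulVec c) 1 V' m := by
  set P := σ.permMatrix ℝ with hPdef
  have hPP : P * P = 1 := perm_mul_perm σ hσ
  have hPT : Pᵀ = P := perm_transpose σ hσ
  have hPinv : P⁻¹ = P := Matrix.inv_eq_right_inv hPP
  have hPPv : ∀ v : Fin n → ℝ, P.mulVec (P.mulVec v) = v := by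
    intro v; rw [mulVec_mulVec, hPP, one_mulVec]
  have hdot : ∀ v w : Fin n → ℝ, P.mulVec v ⬝ᵥ w = v ⬝ᵥ P.mulVec w := by
    intro v w
    rw [Matrix.dotProduct_mulVec, ← mulVec_transpose, hPT]
  -- the key vector identity
  have hvec : P.mulVec ((1 + vecMulVec b c).mulVec (P.mulVec m) + b)
      = (1 + vecMulVec (P.mulVec b) (P.mulVec c)).mulVec m + P.mulVec b := by
    simp only [add_mulVec, one_mulVec, vecMulVec_mulVec', mulVec_add, mulVec_smul, hPPv, hdot]
  -- homog identity
  have hhom : homog (1 + vecMulVec (P.mulVec b) (P.mulVec c)) (P.mulVec b) (P.mulVec c) 1 m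
      = P.mulVec (homog (1 + vecMulVec b c) b c 1 (P.mulVec m)) := by
    unfold homog
    rw [mulVec_smul, hvec, hdot]
  -- Jacobian identity
  have hJac : homogJac (1 + vecMulVec (P.mulVec b) (P.mulVec c)) (P.mulVec b) (P.mulVec c) 1 m
      = P * homogJac (1 + vecMulVec b c) b c 1 (P.mulVec m) * P := by
    unfold homogJac
    rw [Matrix.mul_smul, Matrix.smul_mul, hdot]
    congr 1
    rw [Matrix.mul_sub, Matrix.sub_mul, Matrix.mul_smul, Matrix.smul_mul]
    rw [mul_vecMulVec', vecMulVec_mul', hPT, hvec]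
    congr 2
    rw [mul_add, add_mul, mul_one, hPP, mul_vecMulVec', vecMulVec_mul', hPT]
  set J := homogJac (1 + vecMulVec b c) b c 1 (P.mulVec m) with hJdef
  have hJT : (homogJac (1 + vecMulVec (P.mulVec b) (P.mulVec c)) (P.mulVec b) (P.mulVec c) 1 m)ᵀ
      = P * Jᵀ * P := by
    rw [hJac, transpose_mul, transpose_mul, hPT, mul_assoc]
  have hinv : ∀ M : Matrix (Fin n) (Fin n) ℝ, (P * M * P)⁻¹ = P * M⁻¹ * P := by
    intro M
    rw [Matrix.mul_inv_rev, Matrix.mul_inv_rev, hPinv, mul_assoc]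
  -- outer Tg for g₀
  have h0 : homog P 0 0 1 m = P.mulVec m := by
    simp [homog]
  have h0J : homogJac P 0 0 1 m = P := by
    ext a b'
    simp [homogJac, vecMulVec_apply]
  have hVh : V' (homog (1 + vecMulVec (P.mulVec b) (P.mulVec c)) (P.mulVec b) (P.mulVec c) 1 m)
      = P * V (homog (1 + vecMulVec b c) b c 1 (P.mulVec m)) * P := by
    rw [← hV, hhom, hPPv]
  have hcan : ∀ X : Matrix (Fin n) (Fin n) ℝ, P * (P * X) = X := by
    intro X; rw [← mul_assoc, hPP, one_mul]
  show Tg P 0 0 1 _ m = _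
  unfold Tg
  rw [h0, h0J]
  beta_reduce
  rw [hVh, hJT, hJac, hinv, hinv, hdot, hPinv, hPT, hPinv]
  simp only [zero_dotProduct, zero_add, inv_one, one_smul]
  rw [Matrix.mul_smul, Matrix.smul_mul]
  congr 1
  simp only [mul_assoc, hcan]
  rfl

/-- **Proposition 5.3.** Conjugating `T_{g_{b,c}}` by the permutation of two coordinates acts on
`D(m) = diag(m)` and `E(m) = mmᵀ` as the replacement `(b, c) ↦ (Ab, Ac)`, where `A` is the
permutation matrix of the transposition `(i, j)` and `g₀ = diag(A, 1)`,
`g_{b,c} = [[Iₙ + bcᵀ, b], [cᵀ, 1]]`. -/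
theorem Tg_permutation_conjugation {n : ℕ} (hn : 1 ≤ n)
    (i j : Fin n) (hij : i < j) (b c : Fin n → ℝ) (m : Fin n → ℝ)
    (hm : 0 < c ⬝ᵥ ((Equiv.swap i j).permMatrix ℝ).mulVec m + 1) :
    (Tg ((Equiv.swap i j).permMatrix ℝ) 0 0 1
        (fun x => Tg (1 + vecMulVec b c) b c 1 (fun y => Matrix.diagonal y) x) m
      = Tg (1 + vecMulVec (((Equiv.swap i j).permMatrix ℝ).mulVec b)
              (((Equiv.swap i j).permMatrix ℝ).mulVec c))
          (((Equiv.swap i j).permMatrix ℝ).mulVec b)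
          (((Equiv.swap i j).permMatrix ℝ).mulVec c) 1
          (fun y => Matrix.diagonal y) m) ∧
    (Tg ((Equiv.swap i j).permMatrix ℝ) 0 0 1
        (fun x => Tg (1 + vecMulVec b c) b c 1 (fun y => vecMulVec y y) x) m
      = Tg (1 + vecMulVec (((Equiv.swap i j).permMatrix ℝ).mulVec b)
              (((Equiv.swap i j).permMatrix ℝ).mulVec c))
          (((Equiv.swap i j).permMatrix ℝ).mulVec b)
          (((Equiv.swap i j).permMatrix ℝ).mulVec c) 1
          (fun y => vecMulVec y y) m) := by
  set σ := Equiv.swap i j with hσdef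
  have hσ : ∀ a, σ (σ a) = a := fun a => Equiv.swap_apply_self i j a
  have hs : c ⬝ᵥ (σ.permMatrix ℝ).mulVec m + 1 ≠ 0 := ne_of_gt hm
  have hPP : (σ.permMatrix ℝ) * (σ.permMatrix ℝ) = 1 := perm_mul_perm σ hσ
  have hPT : (σ.permMatrix ℝ)ᵀ = σ.permMatrix ℝ := perm_transpose σ hσ
  have hPPv : ∀ v : Fin n → ℝ, (σ.permMatrix ℝ).mulVec ((σ.permMatrix ℝ).mulVec v) = v := by
    intro v; rw [mulVec_mulVec, hPP, one_mulVec]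
  constructor
  · exact key σ hσ b c m hs _ _ (fun y => by
      rw [perm_diag σ hσ, hPPv])
  · exact key σ hσ b c m hs _ _ (fun y => by
      rw [mul_vecMulVec', vecMulVec_mul', hPT, hPPv])
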